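/- arXiv:2509.19909 — 2 statements merged into one kernel-verified Lean document; each statement's English description precedes it below -/
import Mathlib

section
/- Let A > 0 and T > 0. The equation z = A·(1 - e^{-z·T}) has a strictly positive real root if and only if A·T > 1; moreover, when A·T > 1 the strictly positive root is unique. -/
/-- No two distinct positive roots (strict convexity of exp). -/
lemma aux_uniq (A T z1 z2 : ℝ) (hA : 0 < A) (hT : 0 < T) (hz1 : 0 < z1) (h12 : z1 < z2)
    (h1 : z1 = A * (1 - Real.exp (-z1 * T))) (h2 : z2 = A * (1 - Real.exp (-z2 * T))) :
    False := by
  have hz2 : 0 < z2 := hz1.trans h12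
  have hne : (0:ℝ) ≠ -z2 * T := by nlinarith
  have ha : 0 < 1 - z1/z2 := by
    have : z1/z2 < 1 := (div_lt_one hz2).2 h12
    linarith
  have hb : 0 < z1/z2 := div_pos hz1 hz2
  have hab : (1 - z1/z2) + z1/z2 = 1 := by ring
  have key := strictConvexOn_exp.2 (Set.mem_univ (0:ℝ)) (Set.mem_univ (-z2*T))
    hne ha hb hab
  rw [smul_eq_mul, smul_eq_mul, mul_zero, zero_add] at key
  have harg : (z1/z2) * (-z2*T) = -z1*T := by field_simp
  rw [harg, Real.exp_zero] at key
  -- multiply key by z2 and substitute the root equations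
  have k2 : z2 * Real.exp (-z1*T) < z2 * ((1 - z1/z2) * 1 + (z1/z2) * Real.exp (-z2*T)) :=
    mul_lt_mul_of_pos_left key hz2
  have hrhs : z2 * ((1 - z1/z2) * 1 + (z1/z2) * Real.exp (-z2*T))
      = (z2 - z1) + z1 * Real.exp (-z2*T) := by
    field_simp
  rw [hrhs] at k2
  have e1 : A * Real.exp (-z1*T) = A - z1 := by linarith
  have e2 : A * Real.exp (-z2*T) = A - z2 := by linarith
  nlinarith [mul_lt_mul_of_pos_left k2 hA, e1, e2, hz1, hz2, mul_pos hz1 hz2]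

/-- The characteristic equation `z = A·(1 - e^{-z·T})` of the AK vintage capital model
has a strictly positive real root iff `A·T > 1`, in which case this root is unique. -/
theorem stmt_1 (A T : ℝ) (hA : 0 < A) (hT : 0 < T) :
    ((∃ z : ℝ, 0 < z ∧ z = A * (1 - Real.exp (-z * T))) ↔ 1 < A * T) ∧
    (1 < A * T → ∃! z : ℝ, 0 < z ∧ z = A * (1 - Real.exp (-z * T))) := by
  have fwd : (∃ z : ℝ, 0 < z ∧ z = A * (1 - Real.exp (-z * T))) → 1 < A * T := by
    rintro ⟨z, hz, hroot⟩
    have h1 : (-z * T) + 1 < Real.exp (-z * T) :=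
      Real.add_one_lt_exp (by nlinarith)
    nlinarith
  have exist : 1 < A * T → ∃ z : ℝ, 0 < z ∧ z = A * (1 - Real.exp (-z * T)) := by
    intro hAT
    set ε : ℝ := min (A/2) ((A*T - 1)/(2*T)) with hεdef
    have hε0 : 0 < ε := lt_min (by linarith) (div_pos (by linarith) (by positivity))
    have hεA : ε ≤ A/2 := min_le_left _ _
    have hεT : ε ≤ (A*T-1)/(2*T) := min_le_right _ _
    have hεT' : ε * T < A*T - 1 := by
      have h1 : ε * T ≤ ((A*T-1)/(2*T)) * T := by nlinarith
      have h2 : ((A*T-1)/(2*T)) * T = (A*T-1)/2 := by field_simp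
      nlinarith
    -- f(ε) > 0
    have hE : Real.exp (-ε*T) * (1 + ε*T) ≤ 1 := by
      have h1 : 1 + ε*T ≤ Real.exp (ε*T) := by
        have := Real.add_one_le_exp (ε*T); linarith
      have h2 : Real.exp (-ε*T) * Real.exp (ε*T) = 1 := by
        rw [← Real.exp_add]; simp
      nlinarith [Real.exp_pos (-ε*T)]
    have hfε : 0 < A * (1 - Real.exp (-ε*T)) - ε := by
      nlinarith [Real.exp_pos (-ε*T), mul_pos hε0 hT]
    have hfA : A * (1 - Real.exp (-A*T)) - A < 0 := by
      nlinarith [Real.exp_pos (-A*T)]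
    have hεltA : ε ≤ A := by linarith
    have hcont : ContinuousOn (fun z => A * (1 - Real.exp (-z*T)) - z) (Set.Icc ε A) := by
      fun_prop
    have hmem : (0:ℝ) ∈ Set.Icc (A * (1 - Real.exp (-A*T)) - A) (A * (1 - Real.exp (-ε*T)) - ε) :=
      ⟨hfA.le, hfε.le⟩
    obtain ⟨z, hzmem, hz0⟩ := intermediate_value_Icc' hεltA hcont hmem
    exact ⟨z, lt_of_lt_of_le hε0 hzmem.1, by dsimp at hz0; linarith⟩
  refine ⟨⟨fwd, exist⟩, fun hAT => ?_⟩
  obtain ⟨z, hz, hroot⟩ := exist hAT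
  refine ⟨z, ⟨hz, hroot⟩, ?_⟩
  rintro y ⟨hy, hyroot⟩
  rcases lt_trichotomy y z with h | h | h
  · exact absurd (aux_uniq A T y z hA hT hy h hyroot hroot) (by simp)
  · exact h
  · exact absurd (aux_uniq A T z y hA hT hz h hroot hyroot) (by simp)
end

section
/- Let ρ > 0, let g : [0,∞) → ℝ be measurable with s ↦ e^{-ρs}·g(s) integrable on [0,∞), and let φ : [0,∞) → ℝ be a differentiable function such that for all r ≥ 0: (d/dr)(e^{-ρr}·φ(r)) ≤ -e^{-ρr}·g(r), and limsup_{r→∞} e^{-ρr}·φ(r) ≥ 0. Then φ(0) ≥ ∫_0^∞ e^{-ρs}·g(s) ds. -/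
open MeasureTheory Set Filter Topology

/-- Scalar core of the infinite-horizon verification theorem (supersolution side):
if `(d/dr)(e^{-ρr}φ(r)) ≤ -e^{-ρr}g(r)` for all `r ≥ 0` and
`limsup_{r→∞} e^{-ρr}φ(r) ≥ 0`, then `φ(0) ≥ ∫_0^∞ e^{-ρs}g(s) ds`. -/
theorem stmt_15 (ρ : ℝ) (hρ : 0 < ρ) (g φ : ℝ → ℝ)
    (hg : IntegrableOn (fun s => Real.exp (-ρ * s) * g s) (Ici 0))
    (hφ : ∀ r ≥ (0:ℝ), ∃ d : ℝ,
      HasDerivAt (fun r => Real.exp (-ρ * r) * φ r) d r ∧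
      d ≤ -(Real.exp (-ρ * r) * g r))
    (htrans : (0 : EReal) ≤
      Filter.limsup (fun r => ((Real.exp (-ρ * r) * φ r : ℝ) : EReal)) atTop) :
    φ 0 ≥ ∫ s in Ici 0, Real.exp (-ρ * s) * g s := by
  set F : ℝ → ℝ := fun r => Real.exp (-ρ * r) * φ r with hF
  set h : ℝ → ℝ := fun s => Real.exp (-ρ * s) * g s with hh
  set D : ℝ → ℝ := fun r => if hr : 0 ≤ r then (hφ r hr).choose else 0 with hD
  have hDspec : ∀ r, 0 ≤ r → HasDerivAt F (D r) r ∧ D r ≤ -h r := by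
    intro r hr
    simp only [hD, dif_pos hr]
    exact (hφ r hr).choose_spec
  -- Step 1: for every b ≥ 0, ∫_0^b h ≤ F 0 - F b.
  have key : ∀ b : ℝ, 0 ≤ b → (∫ y in (0:ℝ)..b, h y) ≤ F 0 - F b := by
    intro b hb
    have hcont : ContinuousOn F (Icc 0 b) := fun x hx =>
      ((hDspec x hx.1).1.continuousAt).continuousWithinAt
    have hderiv : ∀ x ∈ Ioo (0:ℝ) b, HasDerivWithinAt F (D x) (Ioi x) x := fun x hx =>
      ((hDspec x hx.1.le).1).hasDerivWithinAt
    have φint : IntegrableOn (fun y => -h y) (Icc 0 b) :=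
      (hg.mono_set (fun x hx => hx.1)).neg
    have := intervalIntegral.sub_le_integral_of_hasDeriv_right_of_le hb hcont hderiv φint
      (fun x hx => (hDspec x hx.1.le).2)
    have hneg : (∫ y in (0:ℝ)..b, -h y) = -(∫ y in (0:ℝ)..b, h y) :=
      intervalIntegral.integral_neg
    rw [hneg] at this
    linarith
  -- Step 2: the interval integrals tend to the improper integral.
  have hIoi : IntegrableOn h (Ioi 0) := hg.mono_set Ioi_subset_Ici_self
  have htend : Tendsto (fun b => ∫ y in (0:ℝ)..b, h y) atTop
      (𝓝 (∫ s in Ici 0, h s)) := by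
    rw [MeasureTheory.integral_Ici_eq_integral_Ioi]
    exact intervalIntegral_tendsto_integral_Ioi 0 hIoi tendsto_id
  -- Step 3: conclude via the transversality condition.
  have hF0 : F 0 = φ 0 := by simp [hF]
  rw [ge_iff_le, ← hF0]
  refine le_of_forall_pos_le_add ?_
  intro ε hε
  -- frequently F r > -ε
  have hfreq : ∃ᶠ r in atTop, (-ε : ℝ) < F r := by
    have hlt : ((-ε : ℝ) : EReal) < Filter.limsup
        (fun r => ((F r : ℝ) : EReal)) atTop := by
      refine lt_of_lt_of_le ?_ htrans
      exact_mod_cast (by linarith : (-ε : ℝ) < 0)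
    have := Filter.frequently_lt_of_lt_limsup (by isBoundedDefault) hlt
    exact this.mono fun r hr => by exact_mod_cast hr
  have hfreq2 : ∃ᶠ b in atTop, (∫ y in (0:ℝ)..b, h y) ≤ F 0 + ε := by
    have : ∀ᶠ b in atTop, (0:ℝ) ≤ b := eventually_ge_atTop 0
    refine (hfreq.and_eventually this).mono ?_
    rintro b ⟨h1, h2⟩
    have := key b h2
    linarith
  by_contra hc
  push_neg at hc
  have hev : ∀ᶠ b in atTop, F 0 + ε < (∫ y in (0:ℝ)..b, h y) :=
    htend.eventually (eventually_gt_nhds hc)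
  obtain ⟨b, hb1, hb2⟩ := (hfreq2.and_eventually hev).exists
  linarith
end
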